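/- (Characterization of zero duality gap) Let X be a nonempty set and 𝓛 a space of abstract linear functions on X containing the zero function. Let f₁, …, f_m : X → ℝ ∪ {+∞} (m ≥ 2) with ⋂_{i=1}^m dom f_i ≠ ∅. The following are equivalent: (i) 0 ∈ ⋂_{ε>0} ⋃_{x ∈ X} ( ∂_ε f₁(x) + ⋯ + ∂_ε f_m(x) ); (ii) (f₁ + ⋯ + f_m)*(0) = (f₁* □ ⋯ □ f_m*)(0) < +∞. -/

import Mathlib

open Set
open scoped Pointwise

variable {X : Type*}

/-- A space of abstract linear functions on `X`: a nonempty family of real-valued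
functions closed under addition, each of whose members admits additive decompositions
of every length `m ≥ 1` inside the family. -/
def IsLinSpace (L : Set (X → ℝ)) : Prop :=
  L.Nonempty ∧
    (∀ l₁ ∈ L, ∀ l₂ ∈ L, l₁ + l₂ ∈ L) ∧
    (∀ l ∈ L, ∀ m : ℕ, 1 ≤ m →
      ∃ g : Fin m → (X → ℝ), (∀ i, g i ∈ L) ∧ l = ∑ i, g i)

/-- Fenchel conjugate of `f : X → ℝ ∪ {+∞}`: `f*(l) = sup_x (l x - f x)`. -/
noncomputable def fconj (f : X → EReal) (l : X → ℝ) : EReal :=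
  ⨆ x : X, ((l x : EReal) - f x)

/-- Abstract biconjugate `f**(x) = sup_{l ∈ L} (l x - f*(l))`. -/
noncomputable def biconj (L : Set (X → ℝ)) (f : X → EReal) (x : X) : EReal :=
  ⨆ l ∈ L, ((l x : EReal) - fconj f l)

/-- ε-subdifferential of `f` at `x` (empty whenever `x ∉ dom f`, i.e. `f x = ⊤`):
`l ∈ ∂_ε f(x)` iff `l ∈ L`, `f x < ⊤` and `f y - f x - (l y - l x) + ε ≥ 0` for all `y`. -/
def subdiff (L : Set (X → ℝ)) (f : X → EReal) (ε : ℝ) (x : X) : Set (X → ℝ) :=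
  {l | l ∈ L ∧ f x < ⊤ ∧ ∀ y, f x + ((l y - l x : ℝ) : EReal) ≤ f y + (ε : EReal)}

/-- Minkowski sum of finitely many subsets of an additive commutative monoid. -/
def minkSum {α : Type*} [AddCommMonoid α] {m : ℕ} (S : Fin m → Set α) : Set α :=
  {a | ∃ g : Fin m → α, (∀ i, g i ∈ S i) ∧ a = ∑ i, g i}

/-- Infimal convolution (over `L`) of finitely many functions,
with the infimum over the empty set equal to `+∞`. -/
noncomputable def infConv (L : Set (X → ℝ)) {m : ℕ}
    (φ : Fin m → (X → ℝ) → EReal) (l : X → ℝ) : EReal :=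
  ⨅ (g : Fin m → (X → ℝ)) (_ : ∀ i, g i ∈ L) (_ : ∑ i, g i = l), ∑ i, φ i (g i)

/-- The space of abstract affine functions generated by `L`: vertical shifts of members of `L`. -/
def Hspace (L : Set (X → ℝ)) : Set (X → ℝ) :=
  {h | ∃ l ∈ L, ∃ c : ℝ, h = fun x => l x + c}

/-- Support set of `f` inside a family `H` of functions: all members of `H` minorizing `f`. -/
def suppIn (H : Set (X → ℝ)) (f : X → EReal) : Set (X → ℝ) :=
  {h | h ∈ H ∧ ∀ x, (h x : EReal) ≤ f x}

/-- `f` is abstract convex w.r.t. the family `H`: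
`f` is the upper envelope of a nonempty subfamily of `H`. -/
def ConvexIn (H : Set (X → ℝ)) (f : X → EReal) : Prop :=
  ∃ S : Set (X → ℝ), S.Nonempty ∧ S ⊆ H ∧ ∀ x, f x = ⨆ h ∈ S, (h x : EReal)

/-- Abstract convexity of a subset `C` of the family `L` (separation property):
every `l₀ ∈ L \ C` is strictly separated from `C` at some point of `X`. -/
def ConvexSetIn (L : Set (X → ℝ)) (C : Set (X → ℝ)) : Prop :=
  C ⊆ L ∧ ∀ l₀ ∈ L, l₀ ∉ C → ∃ x, (⨆ l ∈ C, (l x : EReal)) < (l₀ x : EReal)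

/-- Epigraph of the conjugate of `f`, as a subset of `𝓛 × ℝ`. -/
def epiConj (L : Set (X → ℝ)) (f : X → EReal) : Set ((X → ℝ) × ℝ) :=
  {p | p.1 ∈ L ∧ fconj f p.1 ≤ (p.2 : EReal)}

namespace ERealAux

lemma coe_sum {ι : Type*} (s : Finset ι) (a : ι → ℝ) :
    ((∑ i ∈ s, a i : ℝ) : EReal) = ∑ i ∈ s, (a i : EReal) :=
  map_sum (⟨⟨Real.toEReal, EReal.coe_zero⟩, EReal.coe_add⟩ : ℝ →+ EReal) a s

lemma sum_ne_bot {ι : Type*} (s : Finset ι) (b : ι → EReal) (hb : ∀ i ∈ s, b i ≠ ⊥) :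
    ∑ i ∈ s, b i ≠ ⊥ := by
  induction s using Finset.cons_induction with
  | empty => simp
  | cons a s ha ih =>
    rw [Finset.sum_cons]
    rw [Ne, EReal.add_eq_bot_iff]
    push_neg
    exact ⟨hb a (Finset.mem_cons_self _ _), ih fun i hi => hb i (Finset.mem_cons_of_mem hi)⟩

lemma neg_sum {ι : Type*} (s : Finset ι) (b : ι → EReal) (hb : ∀ i ∈ s, b i ≠ ⊥) :
    ∑ i ∈ s, -b i = -∑ i ∈ s, b i := by
  induction s using Finset.cons_induction with
  | empty => simp
  | cons a s ha ih =>
    rw [Finset.sum_cons, Finset.sum_cons,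
      ih fun i hi => hb i (Finset.mem_cons_of_mem hi),
      EReal.neg_add (Or.inl (hb a (Finset.mem_cons_self _ _)))
        (Or.inr (sum_ne_bot s b fun i hi => hb i (Finset.mem_cons_of_mem hi))),
      sub_eq_add_neg]

lemma sum_coe_sub {ι : Type*} (s : Finset ι) (a : ι → ℝ) (b : ι → EReal)
    (hb : ∀ i ∈ s, b i ≠ ⊥) :
    ∑ i ∈ s, ((a i : EReal) - b i) = ((∑ i ∈ s, a i : ℝ) : EReal) - ∑ i ∈ s, b i := by
  simp only [sub_eq_add_neg]
  rw [Finset.sum_add_distrib, coe_sum, neg_sum s b hb]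

lemma sum_eq_top {ι : Type*} [DecidableEq ι] (s : Finset ι) (b : ι → EReal) (hb : ∀ i ∈ s, b i ≠ ⊥)
    {j : ι} (hj : j ∈ s) (hjt : b j = ⊤) : ∑ i ∈ s, b i = ⊤ := by
  rw [← Finset.add_sum_erase _ _ hj, hjt]
  exact EReal.top_add_of_ne_bot
    (sum_ne_bot _ _ fun i hi => hb i (Finset.mem_of_mem_erase hi))

lemma lt_top_of_sum {ι : Type*} [DecidableEq ι] (s : Finset ι) (b : ι → EReal) (hb : ∀ i ∈ s, b i ≠ ⊥)
    (hs : ∑ i ∈ s, b i < ⊤) {j : ι} (hj : j ∈ s) : b j < ⊤ := by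
  by_contra h
  exact absurd (sum_eq_top s b hb hj (top_le_iff.1 (not_lt.1 h))) hs.ne

lemma le_coe_of_forall {a : EReal} {s : ℝ} (h : ∀ r : ℝ, s < r → a ≤ (r : EReal)) :
    a ≤ (s : EReal) := by
  induction a using EReal.rec with
  | bot => exact bot_le
  | coe t =>
    rw [EReal.coe_le_coe_iff]
    by_contra hc
    push_neg at hc
    have := EReal.coe_le_coe_iff.1 (h ((s + t) / 2) (by linarith))
    linarith
  | top =>
    have := top_le_iff.1 (h (s + 1) (by linarith))
    exact absurd this (EReal.coe_lt_top _).ne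

lemma sum_toReal {ι : Type*} (s : Finset ι) (b : ι → EReal) (hb : ∀ i ∈ s, b i ≠ ⊥)
    (ht : ∀ i ∈ s, b i ≠ ⊤) :
    ∑ i ∈ s, b i = ((∑ i ∈ s, (b i).toReal : ℝ) : EReal) := by
  rw [coe_sum]
  exact (Finset.sum_congr rfl fun i hi => (EReal.coe_toReal (ht i hi) (hb i hi)).symm)

end ERealAux

/-- characterization of zero duality gap: `0` belongs to the
intersection over `ε > 0` of `⋃_{x ∈ X} (∂_ε f₁(x) + ⋯ + ∂_ε f_m(x))` iff
the conjugate of the sum and the infimal convolution of the conjugates agree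
and are finite at `0`. -/
theorem stmt10 [Nonempty X] (L : Set (X → ℝ)) (hL : IsLinSpace L)
    (h0 : (0 : X → ℝ) ∈ L)
    (m : ℕ) (hm : 2 ≤ m) (f : Fin m → X → EReal) (hf : ∀ i y, f i y ≠ ⊥)
    (hdom : ∃ x, ∀ i, f i x < ⊤) :
    ((0 : X → ℝ) ∈ ⋂ (ε : ℝ) (_ : 0 < ε), ⋃ x : X,
        minkSum fun i => subdiff L (f i) ε x) ↔
      (fconj (fun x => ∑ i, f i x) 0 = infConv L (fun i => fconj (f i)) 0 ∧
        fconj (fun x => ∑ i, f i x) 0 < ⊤) := by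
  classical
  have hm0 : (0 : ℝ) < m := by
    have : 0 < m := by omega
    exact_mod_cast this
  have hFbot : ∀ x, ∑ i, f i x ≠ ⊥ := fun x =>
    ERealAux.sum_ne_bot _ _ fun i _ => hf i x
  -- S := fconj (sum) 0 ; S ≠ ⊥
  obtain ⟨x₀, hx₀⟩ := hdom
  have hx₀eq : ∑ i, f i x₀ = ((∑ i, (f i x₀).toReal : ℝ) : EReal) :=
    ERealAux.sum_toReal _ _ (fun i _ => hf i x₀) (fun i _ => (hx₀ i).ne)
  have hSbot : fconj (fun x => ∑ i, f i x) 0 ≠ ⊥ := by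
    have h1 : (((0 : X → ℝ) x₀ : ℝ) : EReal) - ∑ i, f i x₀ ≤
        fconj (fun x => ∑ i, f i x) 0 :=
      le_iSup (fun x => (((0 : X → ℝ) x : ℝ) : EReal) - ∑ i, f i x) x₀
    have h2 : (((0 : ℝ) - ∑ i, (f i x₀).toReal : ℝ) : EReal) ≤
        fconj (fun x => ∑ i, f i x) 0 := by
      rw [EReal.coe_sub]
      rw [hx₀eq] at h1
      exact h1
    intro hb
    rw [hb, le_bot_iff] at h2
    exact (EReal.coe_ne_bot _) h2
  -- weak duality
  have hweak : fconj (fun x => ∑ i, f i x) 0 ≤ infConv L (fun i => fconj (f i)) 0 := by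
    refine le_iInf fun g => le_iInf fun hgL => le_iInf fun hgsum => ?_
    refine iSup_le fun x => ?_
    have hgx : ∑ i, g i x = 0 := by
      rw [← Finset.sum_apply, hgsum]; rfl
    calc (((0 : X → ℝ) x : ℝ) : EReal) - ∑ i, f i x
        = ((∑ i, g i x : ℝ) : EReal) - ∑ i, f i x := by rw [hgx]; rfl
      _ = ∑ i, (((g i x : ℝ) : EReal) - f i x) :=
          (ERealAux.sum_coe_sub _ _ _ fun i _ => hf i x).symm
      _ ≤ ∑ i, fconj (f i) (g i) :=
          Finset.sum_le_sum fun i _ =>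
            le_iSup (fun y => ((g i y : ℝ) : EReal) - f i y) x
  -- key bound from approximate subdifferential data
  have keyA : ∀ ε : ℝ, 0 < ε → ∀ x : X, ∀ l : Fin m → (X → ℝ),
      (∀ i, l i ∈ subdiff L (f i) ε x) → (∑ i, l i = 0) →
      infConv L (fun i => fconj (f i)) 0 ≤
          (((m : ℝ) * ε - ∑ i, (f i x).toReal : ℝ) : EReal) ∧
        (((-∑ i, (f i x).toReal : ℝ)) : EReal) ≤ fconj (fun x => ∑ i, f i x) 0 := by
    intro ε hε x l hl hlsum
    have hfxtop : ∀ i, f i x ≠ ⊤ := fun i => (hl i).2.1.ne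
    set r : Fin m → ℝ := fun i => (f i x).toReal with hr
    have hfx : ∀ i, f i x = ((r i : ℝ) : EReal) := fun i =>
      (EReal.coe_toReal (hfxtop i) (hf i x)).symm
    have hlx : ∑ i, l i x = 0 := by
      rw [← Finset.sum_apply, hlsum]; rfl
    have hc : ∀ i, fconj (f i) (l i) ≤ ((ε + l i x - r i : ℝ) : EReal) := by
      intro i
      refine iSup_le fun y => ?_
      rcases eq_or_ne (f i y) ⊤ with hy | hy
      · rw [hy, EReal.sub_top]; exact bot_le
      · obtain ⟨t, ht⟩ : ∃ t : ℝ, f i y = (t : EReal) :=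
          ⟨(f i y).toReal, (EReal.coe_toReal hy (hf i y)).symm⟩
        have hineq := (hl i).2.2 y
        rw [ht, hfx i, ← EReal.coe_add, ← EReal.coe_add, EReal.coe_le_coe_iff] at hineq
        rw [ht, ← EReal.coe_sub, EReal.coe_le_coe_iff]
        linarith
    constructor
    · calc infConv L (fun i => fconj (f i)) 0
          ≤ ∑ i, fconj (f i) (l i) :=
            iInf_le_of_le l (iInf_le_of_le (fun i => (hl i).1) (iInf_le_of_le hlsum le_rfl))
        _ ≤ ∑ i, ((ε + l i x - r i : ℝ) : EReal) :=
            Finset.sum_le_sum fun i _ => hc i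
        _ = ((∑ i, (ε + l i x - r i) : ℝ) : EReal) := (ERealAux.coe_sum _ _).symm
        _ = (((m : ℝ) * ε - ∑ i, r i : ℝ) : EReal) := by
            rw [EReal.coe_eq_coe_iff]
            rw [Finset.sum_sub_distrib, Finset.sum_add_distrib, hlx, Finset.sum_const,
              Finset.card_univ, Fintype.card_fin]
            push_cast
            ring
    · have h1 : (((0 : X → ℝ) x : ℝ) : EReal) - ∑ i, f i x ≤
          fconj (fun x => ∑ i, f i x) 0 :=
        le_iSup (fun x' => (((0 : X → ℝ) x' : ℝ) : EReal) - ∑ i, f i x') x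
      have hsum : ∑ i, f i x = ((∑ i, r i : ℝ) : EReal) :=
        ERealAux.sum_toReal _ _ (fun i _ => hf i x) (fun i _ => hfxtop i)
      rw [hsum] at h1
      have : (((0 : ℝ) - ∑ i, r i : ℝ) : EReal) ≤ fconj (fun x => ∑ i, f i x) 0 := by
        rw [EReal.coe_sub]; exact h1
      rw [show -∑ i, r i = (0 : ℝ) - ∑ i, r i by ring]
      exact this
  constructor
  · -- (i) → (ii)
    intro hmem
    simp only [mem_iInter, mem_iUnion] at hmem
    have hdata : ∀ ε : ℝ, 0 < ε → ∃ x, ∃ l : Fin m → (X → ℝ),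
        (∀ i, l i ∈ subdiff L (f i) ε x) ∧ ∑ i, l i = 0 := by
      intro ε hε
      obtain ⟨x, hx⟩ := hmem ε hε
      obtain ⟨g, hg, hg0⟩ := hx
      exact ⟨x, g, hg, hg0.symm⟩
    obtain ⟨x1, l1, hl1, hs1⟩ := hdata 1 one_pos
    have h1 := keyA 1 one_pos x1 l1 hl1 hs1
    have hStop : fconj (fun x => ∑ i, f i x) 0 < ⊤ :=
      lt_of_le_of_lt (hweak.trans h1.1) (EReal.coe_lt_top _)
    set s : ℝ := (fconj (fun x => ∑ i, f i x) 0).toReal with hs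
    have hSs : fconj (fun x => ∑ i, f i x) 0 = (s : EReal) :=
      (EReal.coe_toReal hStop.ne hSbot).symm
    refine ⟨le_antisymm hweak ?_, hStop⟩
    rw [hSs]
    refine ERealAux.le_coe_of_forall fun ρ hρ => ?_
    set ε : ℝ := (ρ - s) / m with hεdef
    have hε : 0 < ε := div_pos (by linarith) hm0
    obtain ⟨x, l, hl, hls⟩ := hdata ε hε
    obtain ⟨h2, h3⟩ := keyA ε hε x l hl hls
    rw [hSs, EReal.coe_le_coe_iff] at h3
    refine h2.trans ?_
    rw [EReal.coe_le_coe_iff]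
    have hmε : (m : ℝ) * ε = ρ - s := by
      rw [hεdef, mul_div_cancel₀ _ (ne_of_gt hm0)]
    linarith
  · -- (ii) → (i)
    rintro ⟨heq, htop⟩
    simp only [mem_iInter, mem_iUnion]
    intro ε hε
    set s : ℝ := (fconj (fun x => ∑ i, f i x) 0).toReal with hs
    have hSs : fconj (fun x => ∑ i, f i x) 0 = (s : EReal) :=
      (EReal.coe_toReal htop.ne hSbot).symm
    -- pick near-optimal decomposition
    have hlt : infConv L (fun i => fconj (f i)) 0 < ((s + ε / 2 : ℝ) : EReal) := by
      rw [← heq, hSs]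
      exact_mod_cast (by linarith : s < s + ε / 2)
    simp only [infConv, iInf_lt_iff] at hlt
    obtain ⟨g, hgL, hgsum, hglt⟩ := hlt
    -- pick near-optimal point
    have hlt2 : ((s - ε / 2 : ℝ) : EReal) < fconj (fun x => ∑ i, f i x) 0 := by
      rw [hSs]
      exact_mod_cast (by linarith : s - ε / 2 < s)
    rw [fconj, lt_iSup_iff] at hlt2
    obtain ⟨x, hx⟩ := hlt2
    have hFx_top : ∑ i, f i x ≠ ⊤ := by
      intro h
      rw [h, EReal.sub_top] at hx
      exact absurd hx (by simp)
    set r : Fin m → ℝ := fun i => (f i x).toReal with hr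
    have hfitop : ∀ i, f i x < ⊤ := fun i =>
      ERealAux.lt_top_of_sum Finset.univ (fun i => f i x) (fun i _ => hf i x)
        hFx_top.lt_top (Finset.mem_univ i)
    have hfx : ∀ i, f i x = ((r i : ℝ) : EReal) := fun i =>
      (EReal.coe_toReal (hfitop i).ne (hf i x)).symm
    have hsumfx : ∑ i, f i x = ((∑ i, r i : ℝ) : EReal) :=
      ERealAux.sum_toReal _ _ (fun i _ => hf i x) (fun i _ => (hfitop i).ne)
    have hrs : ∑ i, r i < ε / 2 - s := by
      rw [hsumfx] at hx
      have : ((s - ε / 2 : ℝ) : EReal) < (((0 : ℝ) - ∑ i, r i : ℝ) : EReal) := by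
        rw [EReal.coe_sub ((0:ℝ)) (∑ i, r i)] at *
        convert hx using 2
        rfl
      rw [EReal.coe_lt_coe_iff] at this
      linarith
    -- conjugate values are finite
    have hgx : ∑ i, g i x = 0 := by
      rw [← Finset.sum_apply, hgsum]; rfl
    have hge : ∀ i, ((g i x - r i : ℝ) : EReal) ≤ fconj (f i) (g i) := by
      intro i
      have h1 : ((g i x : ℝ) : EReal) - f i x ≤ fconj (f i) (g i) :=
        le_iSup (fun y => ((g i y : ℝ) : EReal) - f i y) x
      rw [hfx i, ← EReal.coe_sub] at h1
      exact h1
    have hcbot : ∀ i, fconj (f i) (g i) ≠ ⊥ := fun i =>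
      ne_bot_of_le_ne_bot (EReal.coe_ne_bot _) (hge i)
    have hctop : ∀ i, fconj (f i) (g i) < ⊤ := fun i =>
      ERealAux.lt_top_of_sum Finset.univ (fun i => fconj (f i) (g i))
        (fun i _ => hcbot i) (hglt.trans (EReal.coe_lt_top _)) (Finset.mem_univ i)
    set c : Fin m → ℝ := fun i => (fconj (f i) (g i)).toReal with hcdef
    have hceq : ∀ i, fconj (f i) (g i) = ((c i : ℝ) : EReal) := fun i =>
      (EReal.coe_toReal (hctop i).ne (hcbot i)).symm
    have hcsum : ∑ i, c i < s + ε / 2 := by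
      have : ∑ i, fconj (f i) (g i) = ((∑ i, c i : ℝ) : EReal) :=
        ERealAux.sum_toReal _ _ (fun i _ => hcbot i) (fun i _ => (hctop i).ne)
      rw [this, EReal.coe_lt_coe_iff] at hglt
      exact hglt
    have hcge : ∀ i, g i x - r i ≤ c i := fun i => by
      have := hge i
      rw [hceq i, EReal.coe_le_coe_iff] at this
      exact this
    -- per-coordinate bound
    have hterm : ∀ i, c i < ε + g i x - r i := by
      intro i
      have hsum_d : ∑ j, (c j - (g j x - r j)) < ε := by
        rw [Finset.sum_sub_distrib, Finset.sum_sub_distrib, hgx]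
        linarith
      have hle : c i - (g i x - r i) ≤ ∑ j, (c j - (g j x - r j)) :=
        Finset.single_le_sum (fun j _ => by
          show (0:ℝ) ≤ c j - (g j x - r j)
          have := hcge j; linarith) (Finset.mem_univ i)
      have := lt_of_le_of_lt hle hsum_d
      linarith
    -- assemble membership
    refine ⟨x, g, fun i => ⟨hgL i, hfitop i, fun y => ?_⟩, hgsum.symm⟩
    rcases eq_or_ne (f i y) ⊤ with hy | hy
    · rw [hy, EReal.top_add_of_ne_bot (EReal.coe_ne_bot _)]
      exact le_top
    · obtain ⟨t, ht⟩ : ∃ t : ℝ, f i y = (t : EReal) :=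
        ⟨(f i y).toReal, (EReal.coe_toReal hy (hf i y)).symm⟩
      have h1 : ((g i y : ℝ) : EReal) - f i y ≤ fconj (f i) (g i) :=
        le_iSup (fun y' => ((g i y' : ℝ) : EReal) - f i y') y
      rw [ht, hceq i, ← EReal.coe_sub, EReal.coe_le_coe_iff] at h1
      rw [ht, hfx i, ← EReal.coe_add, ← EReal.coe_add, EReal.coe_le_coe_iff]
      have := hterm i
      linarith
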